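/- For every integer k > 1 and every integer n ≡ 5 (mod 6), the polynomial identity/divisibility (k^2 - k + 1) | (k^n + k - 1) holds; in particular k^n + k - 1 is composite for all k > 1 and n ≡ 5 (mod 6) with n ≥ 5. -/
import Mathlib

lemma aux_int (k : ℤ) : ∀ m : ℕ, (k ^ 2 - k + 1) ∣ (k ^ (6 * m + 5) + k - 1) := by
  intro m
  induction m with
  | zero =>
    refine ⟨k ^ 3 + k ^ 2 - 1, by ring⟩
  | succ m ih =>
    have h6 : (k ^ 2 - k + 1) ∣ (k ^ 6 - 1) := ⟨(k + 1) * (k ^ 3 - 1), by ring⟩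
    have key : k ^ (6 * (m + 1) + 5) + k - 1 =
        k ^ 6 * (k ^ (6 * m + 5) + k - 1) - (k ^ 6 - 1) * (k - 1) := by ring
    rw [key]
    exact dvd_sub (Dvd.dvd.mul_left ih _) (Dvd.dvd.mul_right h6 _)

theorem stmt_15 (k n : ℕ) (hk : 1 < k) (hn : n % 6 = 5) :
    (k ^ 2 - k + 1) ∣ (k ^ n + k - 1) ∧
      (5 ≤ n → ¬ (k ^ n + k - 1).Prime) := by
  have hk1 : 1 ≤ k := hk.le
  have hkk : k ≤ k ^ 2 := by nlinarith
  have hkn : 1 ≤ k ^ n + k := le_trans hk1 (Nat.le_add_left _ _)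
  obtain ⟨m, hm⟩ : ∃ m, n = 6 * m + 5 := ⟨n / 6, by omega⟩
  have hdvd : (k ^ 2 - k + 1) ∣ (k ^ n + k - 1) := by
    have := aux_int (k : ℤ) m
    rw [← hm] at this
    have hcast : ((k ^ 2 - k + 1 : ℕ) : ℤ) ∣ ((k ^ n + k - 1 : ℕ) : ℤ) := by
      push_cast [Nat.cast_sub hkk, Nat.cast_sub hkn]
      convert this using 2 <;> push_cast <;> ring
    exact_mod_cast hcast
  refine ⟨hdvd, fun hn5 hp => ?_⟩
  have hd1 : 1 < k ^ 2 - k + 1 := by nlinarith [Nat.sub_add_cancel hkk]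
  have hlt : k ^ 2 - k + 1 < k ^ n + k - 1 := by
    have h5 : k ^ 5 ≤ k ^ n := Nat.pow_le_pow_right (by omega) hn5
    have : k ^ 2 < k ^ 5 := Nat.pow_lt_pow_right hk (by norm_num)
    omega
  rcases (Nat.Prime.eq_one_or_self_of_dvd hp _ hdvd) with h | h
  · omega
  · omega
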